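/- Let d be a dense database of range size N, let 1 ≤ i ≤ N, and let i ≤ i_1 < i_2 < ⋯ < i_k ≤ N. Then the volumes v(i,i_1), v(i,i_2), …, v(i,i_k) are k pairwise distinct vertices of the exact-volume graph G that are pairwise adjacent; that is, they form a clique of size k in G. (For r < s the witnessing third volume is v(i_r + 1, i_s) ∈ V, since v(i,i_s) = v(i,i_r) + v(i_r + 1, i_s).) -/

import Mathlib

/-- The volume of the range `[a,b]` of a database `d`. -/
def dbVol (d : ℕ → ℕ) (a b : ℕ) : ℕ := ∑ k ∈ Finset.Icc a b, d k

/-- The set of all range-query volumes of a database of range size `N`. -/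
def volSet (d : ℕ → ℕ) (N : ℕ) : Set ℕ :=
  {x | ∃ a b, 1 ≤ a ∧ a ≤ b ∧ b ≤ N ∧ x = dbVol d a b}

/-- The exact-volume graph on a set `V` of volumes: distinct `u, w ∈ V` are
adjacent iff there is `z ∈ V` with `u = w + z` or `w = u + z`. -/
def exactGraph (V : Set ℕ) : SimpleGraph ℕ where
  Adj u w := u ≠ w ∧ u ∈ V ∧ w ∈ V ∧ ∃ z ∈ V, u = w + z ∨ w = u + z
  symm := ⟨by
    rintro u w ⟨h1, h2, h3, z, hz, h4⟩
    exact ⟨h1.symm, h3, h2, z, hz, h4.symm⟩⟩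
  loopless := ⟨by rintro u ⟨h, _⟩; exact h rfl⟩

lemma dbVol_split (d : ℕ → ℕ) {i a b : ℕ} (h1 : i ≤ a) (h2 : a ≤ b) :
    dbVol d i b = dbVol d i a + dbVol d (a + 1) b := by
  unfold dbVol
  have hu : Finset.Icc i a ∪ Finset.Ioc a b = Finset.Icc i b := by
    ext x; simp only [Finset.mem_union, Finset.mem_Icc, Finset.mem_Ioc]; omega
  rw [Finset.Icc_add_one_left_eq_Ioc, ← Finset.sum_union (by simp [Finset.disjoint_left, Finset.mem_Icc, Finset.mem_Ioc]; omega), hu]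

lemma dbVol_pos (d : ℕ → ℕ) (N : ℕ) (hdense : ∀ m, 1 ≤ m → m ≤ N → 1 ≤ d m)
    {a b : ℕ} (ha : 1 ≤ a) (hab : a ≤ b) (hb : b ≤ N) : 1 ≤ dbVol d a b := by
  calc 1 ≤ d b := hdense b (ha.trans hab) hb
    _ ≤ dbVol d a b :=
      Finset.single_le_sum (f := d) (fun _ _ => Nat.zero_le _)
        (Finset.mem_Icc.2 ⟨hab, le_rfl⟩)

/-- For a dense database and indices `i ≤ i₁ < i₂ < ⋯ < i_k ≤ N`, the volumes
`v(i,i₁), …, v(i,i_k)` form a clique of size `k` in the exact-volume graph. -/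
theorem stmt_3 (N : ℕ) (hN : 1 ≤ N) (d : ℕ → ℕ)
    (hdense : ∀ m, 1 ≤ m → m ≤ N → 1 ≤ d m)
    (i : ℕ) (hi : 1 ≤ i) (hiN : i ≤ N)
    (k : ℕ) (idx : Fin k → ℕ)
    (hmono : StrictMono idx) (hlo : ∀ r, i ≤ idx r) (hhi : ∀ r, idx r ≤ N) :
    (∀ r, dbVol d i (idx r) ∈ volSet d N) ∧
    (exactGraph (volSet d N)).IsNClique k
      (Finset.univ.image (fun r : Fin k => dbVol d i (idx r))) := by
  have hmem : ∀ r, dbVol d i (idx r) ∈ volSet d N :=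
    fun r => ⟨i, idx r, hi, hlo r, hhi r, rfl⟩
  have hvmono : StrictMono (fun r : Fin k => dbVol d i (idx r)) := by
    intro r s hrs
    have h := hmono hrs
    have := dbVol_split d (hlo r) h.le
    simp only [this]
    have hz : 1 ≤ dbVol d (idx r + 1) (idx s) :=
      dbVol_pos d N hdense (Nat.succ_le_succ (Nat.zero_le _)) h (hhi s)
    omega
  refine ⟨hmem, ?_, ?_⟩
  · intro u hu w hw huw
    simp only [Finset.coe_image, Set.mem_image] at hu hw
    obtain ⟨r, -, rfl⟩ := hu
    obtain ⟨s, -, rfl⟩ := hw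
    rcases lt_trichotomy r s with h | h | h
    · have hlt := hmono h
      refine ⟨huw, hmem r, hmem s, dbVol d (idx r + 1) (idx s),
        ⟨idx r + 1, idx s, Nat.succ_le_succ (Nat.zero_le _), hlt, hhi s, rfl⟩,
        Or.inr (dbVol_split d (hlo r) hlt.le)⟩
    · exact absurd (congrArg (fun r => dbVol d i (idx r)) h) huw
    · have hlt := hmono h
      refine ⟨huw, hmem r, hmem s, dbVol d (idx s + 1) (idx r),
        ⟨idx s + 1, idx r, Nat.succ_le_succ (Nat.zero_le _), hlt, hhi r, rfl⟩,
        Or.inl (dbVol_split d (hlo s) hlt.le)⟩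
  · rw [Finset.card_image_of_injective _ hvmono.injective, Finset.card_univ,
      Fintype.card_fin]
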